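/- Let K be a compact Hausdorff space, ξ an ordinal and n a positive integer. If F is a subset of K^{ω^ξ(n-1)} \ K^{ω^ξ n} (the difference of the indicated Cantor–Bendixson derivatives of K), then CB(F) ≤ ω^ξ. -/

import Mathlib

open Ordinal

/-- The Cantor–Bendixson derivative of a subset `A` of a topological space:
`A` minus its relatively isolated points. -/
def cbDeriv {X : Type*} [TopologicalSpace X] (A : Set X) : Set X :=
  {x ∈ A | ∀ U : Set X, IsOpen U → x ∈ U → ∃ y ∈ U ∩ A, y ≠ x}

/-- Transfinite iterates of the Cantor–Bendixson derivative, with intersections at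
limit stages. -/
noncomputable def cbIter {X : Type*} [TopologicalSpace X] (A : Set X) (o : Ordinal) : Set X :=
  Ordinal.limitRecOn (motive := fun _ => Set X) o A (fun _ ih => cbDeriv ih)
    (fun o _ ih => ⋂ p : Set.Iio o, ih p.1 p.2)

/-- The Cantor–Bendixson index of a (scattered) set: the least ordinal at which the
iterated derivative is empty. -/
noncomputable def cbIndex {X : Type*} [TopologicalSpace X] (A : Set X) : Ordinal :=
  sInf {o | cbIter A o = ∅}

section Aux

variable {X : Type*} [TopologicalSpace X]

lemma cbIter_zero (A : Set X) : cbIter A 0 = A := Ordinal.limitRecOn_zero ..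

lemma cbIter_succ (A : Set X) (o : Ordinal) :
    cbIter A (Order.succ o) = cbDeriv (cbIter A o) := Ordinal.limitRecOn_succ ..

lemma cbIter_limit (A : Set X) {o : Ordinal} (ho : Order.IsSuccLimit o) :
    cbIter A o = ⋂ p : Set.Iio o, cbIter A p.1 := Ordinal.limitRecOn_limit _ _ _ _ ho

lemma cbDeriv_subset (A : Set X) : cbDeriv A ⊆ A := fun _ hx => hx.1

lemma cbDeriv_mono {A B : Set X} (h : A ⊆ B) : cbDeriv A ⊆ cbDeriv B := by
  rintro x ⟨hxA, hx⟩
  exact ⟨h hxA, fun U hU hxU => by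
    obtain ⟨y, ⟨hyU, hyA⟩, hyx⟩ := hx U hU hxU
    exact ⟨y, ⟨hyU, h hyA⟩, hyx⟩⟩

lemma cbIter_mono {A B : Set X} (h : A ⊆ B) (o : Ordinal) : cbIter A o ⊆ cbIter B o := by
  induction o using Ordinal.limitRecOn with
  | zero => simpa [cbIter_zero]
  | add_one o ih => rw [← Order.succ_eq_add_one, cbIter_succ, cbIter_succ]; exact cbDeriv_mono ih
  | limit o ho ih =>
      rw [cbIter_limit A ho, cbIter_limit B ho]
      exact Set.iInter_mono fun p => ih p.1 p.2

lemma cbIter_anti (A : Set X) : ∀ {a b : Ordinal}, a ≤ b → cbIter A b ⊆ cbIter A a := by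
  intro a b
  induction b using Ordinal.limitRecOn with
  | zero => intro h; rw [nonpos_iff_eq_zero.mp h]
  | add_one o ih =>
      rw [← Order.succ_eq_add_one]
      intro h
      rcases Order.le_succ_iff_eq_or_le.mp h with h | h
      · rw [h]
      · exact (by rw [cbIter_succ]; exact cbDeriv_subset _ : cbIter A (Order.succ o) ⊆ cbIter A o).trans (ih h)
  | limit o ho ih =>
      intro h
      rcases eq_or_lt_of_le h with h | h
      · rw [h]
      · rw [cbIter_limit A ho]
        exact Set.iInter_subset_of_subset ⟨a, h⟩ subset_rfl

lemma cbIter_add (A : Set X) (a b : Ordinal) :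
    cbIter A (a + b) = cbIter (cbIter A a) b := by
  induction b using Ordinal.limitRecOn with
  | zero => rw [add_zero, cbIter_zero]
  | add_one o ih => rw [← Order.succ_eq_add_one, Ordinal.add_succ, cbIter_succ, cbIter_succ, ih]
  | limit o ho ih =>
      rw [cbIter_limit A (Ordinal.isSuccLimit_add a ho), cbIter_limit (cbIter A a) ho]
      apply subset_antisymm
      · refine Set.subset_iInter fun p => ?_
        rw [← ih p.1 p.2]
        exact Set.iInter_subset_of_subset ⟨a + p.1, (add_lt_add_iff_left a).mpr p.2⟩ subset_rfl
      · refine Set.subset_iInter fun p => ?_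
        rcases le_or_gt p.1 a with hpa | hpa
        · refine (Set.iInter_subset_of_subset ⟨0, ho.pos⟩ subset_rfl).trans ?_
          rw [← ih 0 ho.pos, add_zero]
          exact cbIter_anti A hpa
        · have h1 : a + (p.1 - a) = p.1 := Ordinal.add_sub_cancel_of_le hpa.le
          have h2 : p.1 - a < o := by
            rw [← add_lt_add_iff_left a, h1]; exact p.2
          refine (Set.iInter_subset_of_subset ⟨p.1 - a, h2⟩ subset_rfl).trans ?_
          rw [← ih _ h2, h1]

end Aux

theorem stmt7 {K : Type*} [TopologicalSpace K] [CompactSpace K] [T2Space K]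
    (ξ : Ordinal) (n : ℕ) (hn : 1 ≤ n) (F : Set K)
    (hF : F ⊆ cbIter (Set.univ : Set K) (omega0 ^ ξ * (↑(n - 1) : Ordinal)) \
      cbIter (Set.univ : Set K) (omega0 ^ ξ * (n : Ordinal))) :
    cbIter F (omega0 ^ ξ) = ∅ := by
  have hFA : F ⊆ cbIter (Set.univ : Set K) (omega0 ^ ξ * (↑(n - 1) : Ordinal)) :=
    fun x hx => (hF hx).1
  have key : cbIter F (omega0 ^ ξ) ⊆ cbIter (Set.univ : Set K) (omega0 ^ ξ * (n : Ordinal)) := by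
    have h1 := cbIter_mono hFA (omega0 ^ ξ)
    rw [← cbIter_add] at h1
    have heq : omega0 ^ ξ * (↑(n - 1) : Ordinal) + omega0 ^ ξ = omega0 ^ ξ * (n : Ordinal) := by
      have : ((n - 1 : ℕ) : Ordinal) + 1 = (n : Ordinal) := by
        rw [← Nat.cast_add_one, Nat.sub_add_cancel hn]
      rw [← this, mul_add, mul_one]
    rwa [heq] at h1
  have hsub : cbIter F (omega0 ^ ξ) ⊆ F := by
    have := cbIter_anti F (zero_le (a := omega0 ^ ξ))
    rwa [cbIter_zero] at this
  ext x
  simp only [Set.mem_empty_iff_false, iff_false]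
  intro hx
  exact (hF (hsub hx)).2 (key hx)
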